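/- In the Euclidean two-circle configuration with fixed Θ ∈ (0,π), the partial derivatives satisfy r_i · ∂θ_i/∂r_i = r_j · ∂θ_j/∂r_j = −d/l < 0; in particular θ_i is strictly decreasing in r_i and strictly increasing in r_j. -/

import Mathlib

open Real

noncomputable def eL (Θ ri rj : ℝ) : ℝ := Real.sqrt (ri ^ 2 + rj ^ 2 + 2 * ri * rj * Real.cos Θ)

/-- Inner angle at vertex `i` of the Euclidean triangle with sides `ri, rj` from the apex
`τ*`, apex angle `π − Θ`, opposite side `eL Θ ri rj` (law of cosines). -/
noncomputable def eθi (Θ ri rj : ℝ) : ℝ :=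
  Real.arccos ((ri ^ 2 + (eL Θ ri rj) ^ 2 - rj ^ 2) / (2 * ri * eL Θ ri rj))

noncomputable def eθj (Θ ri rj : ℝ) : ℝ :=
  Real.arccos ((rj ^ 2 + (eL Θ ri rj) ^ 2 - ri ^ 2) / (2 * rj * eL Θ ri rj))

lemma Qpos (Θ : ℝ) (hΘ : Θ ∈ Set.Ioo 0 π) {rj : ℝ} (hj : 0 < rj) (x : ℝ) :
    0 < x ^ 2 + rj ^ 2 + 2 * x * rj * Real.cos Θ := by
  have hs : 0 < Real.sin Θ := Real.sin_pos_of_pos_of_lt_pi hΘ.1 hΘ.2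
  nlinarith [sq_nonneg (x + rj * Real.cos Θ), Real.sin_sq_add_cos_sq Θ,
    mul_pos (mul_pos hj hj) (mul_pos hs hs)]

lemma eL_pos (Θ : ℝ) (hΘ : Θ ∈ Set.Ioo 0 π) {x rj : ℝ} (hj : 0 < rj) :
    0 < eL Θ x rj := Real.sqrt_pos.mpr (Qpos Θ hΘ hj x)

lemma eL_sq (Θ : ℝ) (hΘ : Θ ∈ Set.Ioo 0 π) {x rj : ℝ} (hj : 0 < rj) :
    (eL Θ x rj) ^ 2 = x ^ 2 + rj ^ 2 + 2 * x * rj * Real.cos Θ :=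
  Real.sq_sqrt (Qpos Θ hΘ hj x).le

lemma eL_symm (Θ a b : ℝ) : eL Θ a b = eL Θ b a := by
  unfold eL; ring_nf

lemma hasDerivAt_F (Θ : ℝ) (hΘ : Θ ∈ Set.Ioo 0 π) {rj : ℝ} (hj : 0 < rj) (x : ℝ) :
    HasDerivAt (fun x => Real.arccos ((x + rj * Real.cos Θ) / eL Θ x rj))
      (-(rj * Real.sin Θ) / (eL Θ x rj) ^ 2) x := by
  have hs : 0 < Real.sin Θ := Real.sin_pos_of_pos_of_lt_pi hΘ.1 hΘ.2
  have hpy := Real.sin_sq_add_cos_sq Θ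
  have hQ := Qpos Θ hΘ hj x
  have hL := eL_pos Θ hΘ (x := x) hj
  have hL2 := eL_sq Θ hΘ (x := x) hj
  set c := Real.cos Θ with hc
  set s := Real.sin Θ with hsdef
  set L := eL Θ x rj with hLdef
  have key : L ^ 2 - (x + rj * c) ^ 2 = (rj * s) ^ 2 := by
    rw [hL2]; nlinarith [hpy]
  have h1 : HasDerivAt (fun x : ℝ => x ^ 2 + rj ^ 2 + 2 * x * rj * c) (2 * x + 2 * rj * c) x := by
    have := (((hasDerivAt_pow 2 x).add_const (rj ^ 2)).add
      ((((hasDerivAt_id x).const_mul (2:ℝ)).mul_const rj).mul_const c))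
    refine this.congr_deriv ?_
    push_cast; ring
  have hl : HasDerivAt (fun x => eL Θ x rj) ((2 * x + 2 * rj * c) / (2 * L)) x := by
    have := h1.sqrt (ne_of_gt hQ)
    convert this using 2 <;> rfl
  have hnum : HasDerivAt (fun x : ℝ => x + rj * c) 1 x := (hasDerivAt_id x).add_const _
  have hu : HasDerivAt (fun x => (x + rj * c) / eL Θ x rj)
      ((1 * L - (x + rj * c) * ((2 * x + 2 * rj * c) / (2 * L))) / L ^ 2) x :=
    hnum.div hl (ne_of_gt hL)
  have hu2 : ((x + rj * c) / L) ^ 2 < 1 := by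
    rw [div_pow, div_lt_one (by positivity)]
    nlinarith [mul_pos (mul_pos hj hj) (mul_pos hs hs)]
  have hne1 : (x + rj * c) / L ≠ 1 := by
    intro h; rw [h] at hu2; norm_num at hu2
  have hne1' : (x + rj * c) / L ≠ -1 := by
    intro h; rw [h] at hu2; norm_num at hu2
  have harc := (Real.hasDerivAt_arccos hne1' hne1).comp x hu
  refine harc.congr_deriv (Eq.symm ?_)
  have hsqrt : Real.sqrt (1 - ((x + rj * c) / L) ^ 2) = rj * s / L := by
    have h1u : 1 - ((x + rj * c) / L) ^ 2 = (rj * s / L) ^ 2 := by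
      field_simp
      linarith [key]
    rw [h1u, Real.sqrt_sq (by positivity)]
  rw [hsqrt]
  field_simp
  linear_combination key

lemma hasDerivAt_G (Θ : ℝ) (hΘ : Θ ∈ Set.Ioo 0 π) {ri y : ℝ} (hi : 0 < ri) (hy : 0 < y) :
    HasDerivAt (fun y => Real.arccos ((ri + y * Real.cos Θ) / eL Θ ri y))
      (ri * Real.sin Θ / (eL Θ ri y) ^ 2) y := by
  have hs : 0 < Real.sin Θ := Real.sin_pos_of_pos_of_lt_pi hΘ.1 hΘ.2
  have hpy := Real.sin_sq_add_cos_sq Θ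
  have hQall : ∀ t : ℝ, 0 < ri ^ 2 + t ^ 2 + 2 * ri * t * Real.cos Θ := by
    intro t
    nlinarith [sq_nonneg (t + ri * Real.cos Θ), Real.sin_sq_add_cos_sq Θ,
      mul_pos (mul_pos hi hi) (mul_pos hs hs)]
  have hQ := hQall y
  have hL : 0 < eL Θ ri y := Real.sqrt_pos.mpr hQ
  have hL2 : (eL Θ ri y) ^ 2 = ri ^ 2 + y ^ 2 + 2 * ri * y * Real.cos Θ :=
    Real.sq_sqrt hQ.le
  set c := Real.cos Θ with hc
  set s := Real.sin Θ with hsdef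
  set L := eL Θ ri y with hLdef
  have key : L ^ 2 - (ri + y * c) ^ 2 = (y * s) ^ 2 := by
    rw [hL2]; nlinarith [hpy]
  have h1 : HasDerivAt (fun t : ℝ => ri ^ 2 + t ^ 2 + 2 * ri * t * c) (2 * y + 2 * ri * c) y := by
    have := ((hasDerivAt_pow 2 y).const_add (ri ^ 2)).add
      ((((hasDerivAt_id y).const_mul (2 * ri : ℝ)).mul_const c))
    refine this.congr_deriv ?_
    push_cast; ring
  have hl : HasDerivAt (fun t => eL Θ ri t) ((2 * y + 2 * ri * c) / (2 * L)) y := by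
    have := h1.sqrt (ne_of_gt hQ)
    convert this using 2 <;> rfl
  have hnum : HasDerivAt (fun t : ℝ => ri + t * c) c y := by
    simpa using ((hasDerivAt_id y).mul_const c).const_add ri
  have hu : HasDerivAt (fun t => (ri + t * c) / eL Θ ri t)
      ((c * L - (ri + y * c) * ((2 * y + 2 * ri * c) / (2 * L))) / L ^ 2) y :=
    hnum.div hl (ne_of_gt hL)
  have hu2 : ((ri + y * c) / L) ^ 2 < 1 := by
    rw [div_pow, div_lt_one (by positivity)]
    nlinarith [mul_pos (mul_pos hy hy) (mul_pos hs hs)]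
  have hne1 : (ri + y * c) / L ≠ 1 := by intro h; rw [h] at hu2; norm_num at hu2
  have hne1' : (ri + y * c) / L ≠ -1 := by intro h; rw [h] at hu2; norm_num at hu2
  have harc := (Real.hasDerivAt_arccos hne1' hne1).comp y hu
  refine harc.congr_deriv (Eq.symm ?_)
  have hsqrt : Real.sqrt (1 - ((ri + y * c) / L) ^ 2) = y * s / L := by
    have h1u : 1 - ((ri + y * c) / L) ^ 2 = (y * s / L) ^ 2 := by
      field_simp
      linarith [key]
    rw [h1u, Real.sqrt_sq (by positivity)]
  rw [hsqrt]
  field_simp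
  linear_combination (ri*y)*hpy + c*hL2

lemma eθi_eq (Θ : ℝ) (hΘ : Θ ∈ Set.Ioo 0 π) {x rj : ℝ} (hx : 0 < x) (hj : 0 < rj) :
    eθi Θ x rj = Real.arccos ((x + rj * Real.cos Θ) / eL Θ x rj) := by
  have hL := eL_pos Θ hΘ (x := x) hj
  unfold eθi
  congr 1
  rw [eL_sq Θ hΘ hj]
  field_simp
  ring

lemma eθj_eq (Θ : ℝ) (hΘ : Θ ∈ Set.Ioo 0 π) {ri y : ℝ} (hi : 0 < ri) (hy : 0 < y) :
    eθj Θ ri y = Real.arccos ((y + ri * Real.cos Θ) / eL Θ y ri) := by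
  have hL := eL_pos Θ hΘ (x := ri) hy
  unfold eθj
  rw [eL_symm Θ y ri]
  congr 1
  rw [eL_sq Θ hΘ hy]
  field_simp
  ring

lemma eθi_eq2 (Θ : ℝ) (hΘ : Θ ∈ Set.Ioo 0 π) {ri y : ℝ} (hi : 0 < ri) (hy : 0 < y) :
    eθi Θ ri y = Real.arccos ((ri + y * Real.cos Θ) / eL Θ ri y) := by
  have hL := eL_pos Θ hΘ (x := ri) hy
  unfold eθi
  congr 1
  rw [eL_sq Θ hΘ hy]
  field_simp
  ring

theorem euclidean_angle_self_derivative
    (Θ : ℝ) (hΘ : Θ ∈ Set.Ioo 0 π) :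
    (∀ ri rj : ℝ, 0 < ri → 0 < rj →
      ri * deriv (fun x => eθi Θ x rj) ri =
        -(ri * rj * Real.sin Θ / eL Θ ri rj) / eL Θ ri rj ∧
      rj * deriv (fun y => eθj Θ ri y) rj =
        -(ri * rj * Real.sin Θ / eL Θ ri rj) / eL Θ ri rj ∧
      -(ri * rj * Real.sin Θ / eL Θ ri rj) / eL Θ ri rj < 0) ∧
    (∀ rj : ℝ, 0 < rj → StrictAntiOn (fun x => eθi Θ x rj) (Set.Ioi 0)) ∧
    (∀ ri : ℝ, 0 < ri → StrictMonoOn (fun y => eθi Θ ri y) (Set.Ioi 0)) := by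
  have hs : 0 < Real.sin Θ := Real.sin_pos_of_pos_of_lt_pi hΘ.1 hΘ.2
  refine ⟨?_, ?_, ?_⟩
  · intro ri rj hi hj
    have hL := eL_pos Θ hΘ (x := ri) hj
    refine ⟨?_, ?_, ?_⟩
    · have hev : (fun x => eθi Θ x rj) =ᶠ[nhds ri]
          (fun x => Real.arccos ((x + rj * Real.cos Θ) / eL Θ x rj)) := by
        filter_upwards [Ioi_mem_nhds hi] with t ht
        exact eθi_eq Θ hΘ ht hj
      rw [hev.deriv_eq, (hasDerivAt_F Θ hΘ hj ri).deriv]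
      field_simp
    · have hev : (fun y => eθj Θ ri y) =ᶠ[nhds rj]
          (fun y => Real.arccos ((y + ri * Real.cos Θ) / eL Θ y ri)) := by
        filter_upwards [Ioi_mem_nhds hj] with t ht
        exact eθj_eq Θ hΘ hi ht
      rw [hev.deriv_eq, (hasDerivAt_F Θ hΘ hi rj).deriv, eL_symm Θ rj ri]
      field_simp
    · rw [neg_div]
      have : 0 < ri * rj * Real.sin Θ / eL Θ ri rj / eL Θ ri rj :=
        div_pos (div_pos (by positivity) hL) hL
      linarith
  · intro rj hj
    have hanti : StrictAntiOn
        (fun x => Real.arccos ((x + rj * Real.cos Θ) / eL Θ x rj)) (Set.Ioi 0) := by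
      apply strictAntiOn_of_deriv_neg (convex_Ioi 0)
      · exact fun x _ =>
          (hasDerivAt_F Θ hΘ hj x).differentiableAt.continuousAt.continuousWithinAt
      · intro x hx
        rw [(hasDerivAt_F Θ hΘ hj x).deriv]
        have hL := eL_pos Θ hΘ (x := x) hj
        apply div_neg_of_neg_of_pos (by nlinarith) (by positivity)
    intro a ha b hb hab
    have := hanti ha hb hab
    simpa only [eθi_eq Θ hΘ ha hj, eθi_eq Θ hΘ hb hj] using this
  · intro ri hi
    have hmono : StrictMonoOn
        (fun y => Real.arccos ((ri + y * Real.cos Θ) / eL Θ ri y)) (Set.Ioi 0) := by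
      apply strictMonoOn_of_deriv_pos (convex_Ioi 0)
      · intro y hy
        exact (hasDerivAt_G Θ hΘ hi hy).differentiableAt.continuousAt.continuousWithinAt
      · intro y hy
        rw [interior_Ioi] at hy
        rw [(hasDerivAt_G Θ hΘ hi hy).deriv]
        have hL := eL_pos Θ hΘ (x := y) hi
        rw [eL_symm Θ y ri] at hL
        positivity
    intro a ha b hb hab
    have := hmono ha hb hab
    simpa only [eθi_eq2 Θ hΘ hi ha, eθi_eq2 Θ hΘ hi hb] using this
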